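/- (Lemma on exit times of exhausted open sets.) Let X be a topological space, ω : [0,∞) → X a continuous path, Ω ⊆ X open, and let Ω_n ⊆ Ω, n ∈ ℕ, be open sets with Ω_n ⊆ Ω_{n+1} for all n, ω(0) ∈ Ω_1, and ⋃_{n∈ℕ} Ω_n = Ω. Then the sequence α_{Ω_n}(ω) is nondecreasing and α_{Ω_n}(ω) → α_Ω(ω) as n → ∞ (equivalently, sup_n α_{Ω_n}(ω) = α_Ω(ω) in [0,∞]). -/

import Mathlib

open MeasureTheory Set
open scoped ENNReal

/-- First exit time of the path `ω` from `U`: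
`α_U(ω) = inf {t > 0 : ω t ∉ U}`, valued in `[0,∞]` with `inf ∅ = ∞`. -/
noncomputable def exitTime {X : Type*} (ω : ℝ → X) (U : Set X) : ℝ≥0∞ :=
  sInf (ENNReal.ofReal '' {r : ℝ | 0 < r ∧ ω r ∉ U})

/-- First penetration time of the path `ω` into the complement of `U`:
`β_U(ω) = inf {t > 0 : λ({s ∈ [0,t] : ω s ∉ U}) > 0}`, valued in `[0,∞]`
with `inf ∅ = ∞`, where `λ` is the Lebesgue outer measure. -/
noncomputable def penTime {X : Type*} (ω : ℝ → X) (U : Set X) : ℝ≥0∞ :=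
  sInf (ENNReal.ofReal ''
    {r : ℝ | 0 < r ∧ 0 < volume {s : ℝ | s ∈ Icc 0 r ∧ ω s ∉ U}})

theorem exitTime_exhaustion
    {X : Type*} [TopologicalSpace X] (ω : ℝ → X)
    (hω : ContinuousOn ω (Ici (0 : ℝ)))
    (Ω : Set X) (hΩ : IsOpen Ω)
    (Ωn : ℕ → Set X) (hΩn : ∀ n, IsOpen (Ωn n))
    (hsub : ∀ n, Ωn n ⊆ Ω)
    (hmono : ∀ n, Ωn n ⊆ Ωn (n + 1))
    (h0 : ω 0 ∈ Ωn 0)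
    (hUnion : (⋃ n, Ωn n) = Ω) :
    Monotone (fun n => exitTime ω (Ωn n)) ∧
      (⨆ n, exitTime ω (Ωn n)) = exitTime ω Ω := by
  have hΩmono : Monotone Ωn := monotone_nat_of_le_succ hmono
  have hmonoE : Monotone fun n => exitTime ω (Ωn n) := by
    intro n m hnm
    apply sInf_le_sInf
    apply image_mono
    intro r hr
    exact ⟨hr.1, fun h => hr.2 (hΩmono hnm h)⟩
  refine ⟨hmonoE, ?_⟩
  apply le_antisymm
  · apply iSup_le
    intro n
    apply sInf_le_sInf
    apply image_mono
    intro r hr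
    exact ⟨hr.1, fun h => hr.2 (hsub n h)⟩
  · by_contra h
    push_neg at h
    obtain ⟨c, hc1, hc2⟩ := exists_between h
    have hcne : c ≠ ⊤ := (hc2.trans_le le_top).ne
    set T := c.toReal with hT
    have hT0 : 0 ≤ T := ENNReal.toReal_nonneg
    have hcT : ENNReal.ofReal T = c := ENNReal.ofReal_toReal hcne
    have himg : ω '' Icc 0 T ⊆ Ω := by
      rintro x ⟨t, ht, rfl⟩
      rcases eq_or_lt_of_le ht.1 with h0t | h0t
      · rw [← h0t]; exact hsub 0 h0
      · by_contra hx
        have h1 : exitTime ω Ω ≤ ENNReal.ofReal t :=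
          sInf_le ⟨t, ⟨h0t, hx⟩, rfl⟩
        have h2 : exitTime ω Ω ≤ c := h1.trans (by
          rw [← hcT]; exact ENNReal.ofReal_le_ofReal ht.2)
        exact absurd (hc2.trans_le h2) (lt_irrefl _)
    have hK : IsCompact (ω '' Icc 0 T) :=
      (isCompact_Icc).image_of_continuousOn (hω.mono Icc_subset_Ici_self)
    have hcover : ω '' Icc 0 T ⊆ ⋃ n, Ωn n := by rw [hUnion]; exact himg
    obtain ⟨s, hs⟩ := hK.elim_finite_subcover Ωn hΩn hcover
    set N := s.sup id
    have hsN : ω '' Icc 0 T ⊆ Ωn N := by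
      intro x hx
      obtain ⟨i, hi, hxi⟩ := mem_iUnion₂.mp (hs hx)
      exact hΩmono (Finset.le_sup (f := id) hi) hxi
    have hle : c ≤ exitTime ω (Ωn N) := by
      rw [← hcT]
      apply le_sInf
      rintro b ⟨r, ⟨hr0, hr⟩, rfl⟩
      apply ENNReal.ofReal_le_ofReal
      by_contra hrT
      push_neg at hrT
      exact hr (hsN ⟨r, ⟨hr0.le, hrT.le⟩, rfl⟩)
    exact absurd (hle.trans (le_iSup (fun n => exitTime ω (Ωn n)) N)) (not_le_of_gt hc1)
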